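/- Let J ⊆ I_n with the parabolic subgroup W_J finite, and let λ be a J^c-dominant position. If s_{i_p}···s_{i_2}s_{i_1} is a reduced expression for an element of W^J, then (γ_{i_1},…,γ_{i_p}) is a legal sequence of node firings from the initial position λ; equivalently, the root s_{i_1}s_{i_2}···s_{i_{q−1}}.α_{i_q} is positive for each 1 ≤ q ≤ p and its pairing with λ is positive. -/

import Mathlib

/-- An E-generalized Cartan matrix (E-GCM) on a finite index type `ι`. -/
structure EGCM (ι : Type*) [Fintype ι] where
  /-- the matrix of amplitudes -/
  M : ι → ι → ℝ
  diag : ∀ i, M i i = 2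
  offDiag_nonpos : ∀ i j, i ≠ j → M i j ≤ 0
  zero_iff : ∀ i j, M i j = 0 ↔ M j i = 0
  prod_cond : ∀ i j, i ≠ j → M i j * M j i ≠ 0 →
    4 ≤ M i j * M j i ∨
      ∃ k : ℕ, 3 ≤ k ∧ M i j * M j i = 4 * Real.cos (Real.pi / k) ^ 2

namespace EGCM

variable {ι : Type*} [Fintype ι]

/-- Adjacency in the E-GCM graph. -/
def Adj (E : EGCM ι) (i j : ι) : Prop := i ≠ j ∧ E.M i j ≠ 0

/-- The underlying simple graph of an E-GCM graph. -/
def graph (E : EGCM ι) : SimpleGraph ι where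
  Adj i j := i ≠ j ∧ E.M i j ≠ 0
  symm := by
    constructor
    intro i j ⟨h1, h2⟩
    exact ⟨h1.symm, fun hz => h2 ((E.zero_iff j i).mp hz)⟩
  loopless := by constructor; intro i ⟨h, _⟩; exact h rfl

/-- The result of firing node `i` from position `lam`. -/
def fire (E : EGCM ι) (lam : ι → ℝ) (i : ι) : ι → ℝ := fun j => lam j - E.M i j * lam i

/-- The position resulting from firing the nodes in the list `s` in order. -/
def fireList (E : EGCM ι) (lam : ι → ℝ) : List ι → (ι → ℝ)
  | [] => lam
  | i :: s => fireList E (E.fire lam i) s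

/-- The firing sequence `s` is legal from position `lam`: at each step the
fired node carries a positive number. -/
def Legal (E : EGCM ι) (lam : ι → ℝ) : List ι → Prop
  | [] => True
  | i :: s => 0 < lam i ∧ Legal E (E.fire lam i) s

/-- A position with no positive entries. -/
def Terminal (lam : ι → ℝ) : Prop := ∀ i, lam i ≤ 0

/-- `s` is a (convergent) game sequence from `lam`: a legal firing sequence whose
resulting position has no positive entries. -/
def IsGameSeq (E : EGCM ι) (lam : ι → ℝ) (s : List ι) : Prop :=
  E.Legal lam s ∧ Terminal (E.fireList lam s)

/-- The position after `k` steps of the infinite firing sequence `f`. -/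
def posAt (E : EGCM ι) (lam : ι → ℝ) (f : ℕ → ι) : ℕ → (ι → ℝ)
  | 0 => lam
  | k + 1 => E.fire (posAt E lam f k) (f k)

/-- `f` is a divergent game sequence from `lam`: an infinite sequence of legal firings. -/
def DivergentSeq (E : EGCM ι) (lam : ι → ℝ) (f : ℕ → ι) : Prop :=
  ∀ k, 0 < E.posAt lam f k (f k)

/-- A dominant position: all numbers nonnegative. -/
def Dominant (lam : ι → ℝ) : Prop := ∀ i, 0 ≤ lam i

/-- A strongly dominant position: all numbers positive. -/
def StronglyDominant (lam : ι → ℝ) : Prop := ∀ i, 0 < lam i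

/-- The E-GCM graph is admissible if some nonzero dominant position has a
convergent game sequence. -/
def Admissible (E : EGCM ι) : Prop :=
  ∃ lam : ι → ℝ, Dominant lam ∧ lam ≠ 0 ∧ ∃ s : List ι, E.IsGameSeq lam s

/-- The E-GCM graph is strongly admissible if every nonzero dominant position has a
convergent game sequence. -/
def StronglyAdmissible (E : EGCM ι) : Prop :=
  ∀ lam : ι → ℝ, Dominant lam → lam ≠ 0 → ∃ s : List ι, E.IsGameSeq lam s

/-- A position is adjacency-free if no position reachable from it by a legal firing
sequence (i.e. no intermediate position of a game sequence) has positive numbers at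
two adjacent nodes. -/
def AdjacencyFree (E : EGCM ι) (lam : ι → ℝ) : Prop :=
  ∀ s : List ι, E.Legal lam s →
    ¬ ∃ i j, E.Adj i j ∧ 0 < E.fireList lam s i ∧ 0 < E.fireList lam s j

/-- A `J`-complement-dominant position: zero exactly at the nodes of `J`, positive elsewhere. -/
def JcDominant (J : Set ι) (lam : ι → ℝ) : Prop :=
  (∀ j ∈ J, lam j = 0) ∧ ∀ i ∉ J, 0 < lam i

open Classical in
/-- The Coxeter exponent `m i j` attached to the E-GCM: `m i j = k` if
`M i j * M j i = 4 cos²(π/k)` with `k ≥ 2`, and `m i j = 0` (representing `∞`)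
if `M i j * M j i ≥ 4`. -/
noncomputable def m (E : EGCM ι) (i j : ι) : ℕ :=
  if i = j then 1
  else if h : ∃ k : ℕ, 2 ≤ k ∧ E.M i j * E.M j i = 4 * Real.cos (Real.pi / k) ^ 2
    then Nat.find h else 0

theorem m_symm (E : EGCM ι) (i j : ι) : E.m i j = E.m j i := by
  unfold m
  rcases eq_or_ne i j with rfl | hij
  · simp
  · rw [if_neg hij, if_neg (Ne.symm hij)]
    by_cases h : ∃ k : ℕ, 2 ≤ k ∧ E.M i j * E.M j i = 4 * Real.cos (Real.pi / k) ^ 2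
    · have h' : ∃ k : ℕ, 2 ≤ k ∧ E.M j i * E.M i j = 4 * Real.cos (Real.pi / k) ^ 2 := by
        rw [mul_comm]; exact h
      rw [dif_pos h, dif_pos h']
      exact le_antisymm (Nat.find_mono fun n hn => by rwa [mul_comm (E.M i j)])
        (Nat.find_mono fun n hn => by rwa [mul_comm (E.M j i)])
    · have h' : ¬ ∃ k : ℕ, 2 ≤ k ∧ E.M j i * E.M i j = 4 * Real.cos (Real.pi / k) ^ 2 := by
        rw [mul_comm]; exact h
      rw [dif_neg h, dif_neg h']

theorem m_offDiag (E : EGCM ι) (i j : ι) (h : i ≠ j) : E.m i j ≠ 1 := by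
  classical
  unfold m
  rw [if_neg h]
  split
  · rename_i hex
    have := Nat.find_spec hex
    omega
  · omega

/-- The Coxeter matrix associated to the E-GCM. -/
noncomputable def cox (E : EGCM ι) : CoxeterMatrix ι where
  M := fun i j => E.m i j
  isSymm := by
    ext i j
    exact E.m_symm j i
  diagonal := by intro i; simp [m]
  off_diagonal := fun i j h => E.m_offDiag i j h

/-- The reflection `S i` of the geometric representation:
`S i v = v − 2 B(α i, v) • α i` where `B (α i, α j) = M i j / 2`. -/
noncomputable def S [DecidableEq ι] (E : EGCM ι) (i : ι) : Module.End ℝ (ι → ℝ) :=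
  LinearMap.id -
    LinearMap.smulRight
      ((∑ k, E.M i k • LinearMap.proj k : (ι → ℝ) →ₗ[ℝ] ℝ)) (Pi.single i 1)

end EGCM

section Roots

variable {ι : Type*} [Fintype ι] [DecidableEq ι]
variable {W : Type*} [Group W]

/-- `α` is a root for the geometric representation `σ`. -/
def IsRoot (σ : W →* Module.End ℝ (ι → ℝ)) (α : ι → ℝ) : Prop :=
  ∃ (w : W) (i : ι), σ w (Pi.single i 1) = α

/-- `α` is a positive root. -/
def IsPosRoot (σ : W →* Module.End ℝ (ι → ℝ)) (α : ι → ℝ) : Prop :=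
  IsRoot σ α ∧ ∀ i, 0 ≤ α i

/-- `α` is a negative root. -/
def IsNegRoot (σ : W →* Module.End ℝ (ι → ℝ)) (α : ι → ℝ) : Prop :=
  IsRoot σ α ∧ ∀ i, α i ≤ 0

/-- `N_M(w)`: the set of positive roots sent to negative roots by `w`. -/
def NM (σ : W →* Module.End ℝ (ι → ℝ)) (w : W) : Set (ι → ℝ) :=
  {α | IsPosRoot σ α ∧ IsNegRoot σ (σ w α)}

/-- `𝔖_M(α)`: the positive roots which are real multiples of `α`. -/
def Sfrak (σ : W →* Module.End ℝ (ι → ℝ)) (α : ι → ℝ) : Set (ι → ℝ) :=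
  {β | (∃ K : ℝ, β = K • α) ∧ IsPosRoot σ β}

end Roots

section Parabolic

variable {ι : Type*} {W : Type*} [Group W]

/-- The standard parabolic subgroup `W_J`. -/
def parabolic {M : CoxeterMatrix ι} (cs : CoxeterSystem M W) (J : Set ι) : Subgroup W :=
  Subgroup.closure (cs.simple '' J)

/-- The set `W^J` of minimal coset representatives. -/
def minReps {M : CoxeterMatrix ι} (cs : CoxeterSystem M W) (J : Set ι) : Set W :=
  {w | ∀ j ∈ J, cs.length w < cs.length (w * cs.simple j)}

end Parabolic

namespace EGCM

variable {ι : Type*} [Fintype ι]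

/-- The E-GCM subgraph induced on a subset `I` of the nodes. -/
def restrict (E : EGCM ι) (I : Finset ι) : EGCM {x // x ∈ I} where
  M i j := E.M i j
  diag i := E.diag i
  offDiag_nonpos i j h := E.offDiag_nonpos i j (fun hc => h (Subtype.ext hc))
  zero_iff i j := E.zero_iff i j
  prod_cond i j h := E.prod_cond i j (fun hc => h (Subtype.ext hc))

/-- Adjacent nodes `i`, `j` are odd-neighborly if `m i j` is odd. -/
def OddNeighborly (E : EGCM ι) (i j : ι) : Prop := E.Adj i j ∧ Odd (E.m i j)

/-- The factor `K_{j i} = −(M j i) / (2 cos (π / m i j))` attached to an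
odd-neighborly pair `(i, j)`. -/
noncomputable def Kfac (E : EGCM ι) (i j : ι) : ℝ :=
  -E.M j i / (2 * Real.cos (Real.pi / (E.m i j : ℝ)))

/-- `Π_P` for the ON-path `P` given by a list of nodes: the product of the factors
`K` along consecutive pairs. -/
noncomputable def piON (E : EGCM ι) : List ι → ℝ
  | [] => 1
  | [_] => 1
  | a :: b :: t => piON E (b :: t) * E.Kfac a b

/-- `y` can be reached from `x` by a path of odd neighbors. -/
def ONReach (E : EGCM ι) (x y : ι) : Prop :=
  ∃ l : List ι, l.Chain' E.OddNeighborly ∧ l.head? = some x ∧ l.getLast? = some y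

/-- The ON-connected component containing `x` is unital ON-cyclic: every ON-cycle
whose nodes lie in this component has `Π = 1`. -/
def UnitalONCyclicAt (E : EGCM ι) (x : ι) : Prop :=
  ∀ l : List ι, l ≠ [] → l.Chain' E.OddNeighborly → (∀ y ∈ l, E.ONReach x y) →
    l.head? = l.getLast? → E.piON l = 1

/-- The E-GCM graph has an odd asymmetry: an odd-neighborly pair `i`, `j` with
`M i j ≠ M j i`. -/
def HasOddAsymmetry (E : EGCM ι) : Prop :=
  ∃ i j, E.OddNeighborly i j ∧ E.M i j ≠ E.M j i

end EGCM

section FullComm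

variable {ι : Type*} [Fintype ι] {W : Type*} [Group W]

/-- An elementary simplification of commuting type: interchange adjacent letters
`x`, `y` with `m x y = 2`. -/
def CommMove (E : EGCM ι) (l l' : List ι) : Prop :=
  ∃ (u v : List ι) (x y : ι), E.m x y = 2 ∧ l = u ++ x :: y :: v ∧ l' = u ++ y :: x :: v

/-- `w` is fully commutative: any reduced word for `w` can be obtained from any other
by a sequence of elementary simplifications of commuting type. -/
def FullyCommutative (E : EGCM ι) {W : Type*} [Group W] (cs : CoxeterSystem E.cox W)
    (w : W) : Prop :=
  ∀ l l' : List ι,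
    cs.IsReduced l.reverse → cs.wordProd l.reverse = w →
    cs.IsReduced l'.reverse → cs.wordProd l'.reverse = w →
    Relation.ReflTransGen (CommMove E) l l'

end FullComm

/-- The Coxeter graph of a Coxeter matrix: an edge between `i ≠ j` iff `m i j ≠ 2`. -/
def coxGraph {ι : Type*} (cm : CoxeterMatrix ι) : SimpleGraph ι where
  Adj i j := i ≠ j ∧ cm i j ≠ 2
  symm := by
    constructor
    intro i j ⟨h1, h2⟩
    exact ⟨h1.symm, by rwa [cm.symmetric j i]⟩
  loopless := by constructor; intro i ⟨h, _⟩; exact h rfl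

/-- The E-GCM `E` has associated exponents given by the Coxeter matrix `cm`:
`M i j * M j i = 4 cos² (π / cm i j)` when `cm i j ≠ 0` and `M i j * M j i ≥ 4`
when `cm i j = 0` (representing `∞`), with `M i j = 0` iff `cm i j = 2`. -/
def Compat {ι : Type*} [Fintype ι] (E : EGCM ι) (cm : CoxeterMatrix ι) : Prop :=
  ∀ i j : ι, i ≠ j →
    (E.M i j = 0 ↔ cm i j = 2) ∧
    ((cm i j = 0 ∧ 4 ≤ E.M i j * E.M j i) ∨
      (cm i j ≠ 0 ∧ E.M i j * E.M j i = 4 * Real.cos (Real.pi / (cm i j : ℝ)) ^ 2))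

section Aux

open Real CoxeterSystem

namespace EGCM

variable {ι : Type*} [Fintype ι]

/-- The alternating coefficient sequence for the rank-2 computation. -/
def vecAlt (a b : ℝ) : ℕ → ℝ × ℝ
  | 0 => (1, 0)
  | n+1 => if Even n then ((vecAlt a b n).1, b * (vecAlt a b n).1 - (vecAlt a b n).2)
           else (a * (vecAlt a b n).2 - (vecAlt a b n).1, (vecAlt a b n).2)

lemma sin_step (A θ : ℝ) :
    Real.sin (A + 2*θ) = 2 * Real.cos θ * Real.sin (A + θ) - Real.sin A := by
  rw [Real.sin_add, Real.sin_add, Real.cos_two_mul, Real.sin_two_mul]; ring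

lemma vecAlt_closed (a b θ : ℝ) (hab : a * b = 4 * Real.cos θ ^ 2)
    (hs : Real.sin θ ≠ 0) (hc : Real.cos θ ≠ 0) :
    ∀ n : ℕ,
      (vecAlt a b n).1 = Real.sin (((if Even n then n+1 else n) : ℕ) * θ) / Real.sin θ ∧
      (vecAlt a b n).2 = b * Real.sin (((if Even n then n else n+1) : ℕ) * θ)
          / (Real.sin θ * (2 * Real.cos θ)) := by
  intro n
  induction n with
  | zero => simp [vecAlt, div_self hs]
  | succ n ih =>
    obtain ⟨ih1, ih2⟩ := ih
    have key2 : Real.sin ((n+2 : ℕ) * θ)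
        = 2 * Real.cos θ * Real.sin ((n+1 : ℕ) * θ) - Real.sin ((n : ℕ) * θ) := by
      have h1 : ((n+2 : ℕ) : ℝ) * θ = (n : ℕ) * θ + 2 * θ := by push_cast; ring
      have h2 : ((n+1 : ℕ) : ℝ) * θ = (n : ℕ) * θ + θ := by push_cast; ring
      rw [h1, h2, sin_step]
    by_cases he : Even n
    · have he' : ¬ Even (n+1) := by simp [Nat.even_add_one, he]
      rw [if_pos he] at ih1; rw [if_pos he] at ih2
      rw [show (vecAlt a b (n+1)) = ((vecAlt a b n).1, b * (vecAlt a b n).1 - (vecAlt a b n).2)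
        from by rw [vecAlt, if_pos he], if_neg he', if_neg he']
      refine ⟨ih1, ?_⟩
      rw [ih1, ih2, key2]
      field_simp
    · have he' : Even (n+1) := Nat.even_add_one.mpr he
      rw [if_neg he] at ih1; rw [if_neg he] at ih2
      rw [show (vecAlt a b (n+1)) = (a * (vecAlt a b n).2 - (vecAlt a b n).1, (vecAlt a b n).2)
        from by rw [vecAlt, if_neg he], if_pos he', if_pos he']
      refine ⟨?_, ih2⟩
      rw [ih1, ih2, key2]
      field_simp
      linear_combination (Real.sin (((n+1 : ℕ) : ℝ) * θ)) * hab

lemma vecAlt_nonneg_fin (a b : ℝ) (ha : 0 ≤ a) (hb : 0 ≤ b) (m : ℕ) (hm : 3 ≤ m)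
    (hab : a * b = 4 * Real.cos (Real.pi / m) ^ 2) (n : ℕ) (hn : n + 1 ≤ m) :
    0 ≤ (vecAlt a b n).1 ∧ 0 ≤ (vecAlt a b n).2 := by
  set θ := Real.pi / m with hθdef
  have hm0 : (0:ℝ) < m := by positivity
  have hθpos : 0 < θ := by positivity
  have hθlt : θ < Real.pi / 2 := by
    rw [hθdef, div_lt_div_iff₀ hm0 two_pos]
    nlinarith [Real.pi_pos, (show (3:ℝ) ≤ m by exact_mod_cast hm)]
  have hs : 0 < Real.sin θ := Real.sin_pos_of_pos_of_lt_pi hθpos (by linarith [Real.pi_pos])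
  have hc : 0 < Real.cos θ := Real.cos_pos_of_mem_Ioo ⟨by linarith, hθlt⟩
  have hsin : ∀ k : ℕ, k ≤ m → 0 ≤ Real.sin ((k : ℕ) * θ) := by
    intro k hk
    apply Real.sin_nonneg_of_nonneg_of_le_pi
    · positivity
    · have h1 : (k:ℝ) * θ ≤ (m:ℝ) * θ := by
        apply mul_le_mul_of_nonneg_right _ hθpos.le
        exact_mod_cast hk
      have hmθ : (m:ℝ) * θ = Real.pi := by
        rw [hθdef]; field_simp
      linarith
  obtain ⟨h1, h2⟩ := vecAlt_closed a b θ hab hs.ne' hc.ne' n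
  constructor
  · rw [h1]
    apply div_nonneg _ hs.le
    apply hsin
    split <;> omega
  · rw [h2]
    apply div_nonneg
    · apply mul_nonneg hb
      apply hsin
      split <;> omega
    · positivity

lemma vecAlt_inv_inf (a b : ℝ) (ha : 0 ≤ a) (hb : 0 ≤ b) (hab : 4 ≤ a * b) (k : ℕ) :
    0 < (vecAlt a b (2*k+1)).2 ∧ (vecAlt a b (2*k+1)).2 ≤ b * (vecAlt a b (2*k+1)).1 ∧
      2 * (vecAlt a b (2*k+1)).1 ≤ a * (vecAlt a b (2*k+1)).2 := by
  have ha' : 0 < a := by rcases ha.lt_or_eq with h | h; exact h; rw [← h] at hab; simp at hab; linarith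
  have hb' : 0 < b := by rcases hb.lt_or_eq with h | h; exact h; rw [← h] at hab; simp at hab; linarith
  induction k with
  | zero =>
    have h1 : vecAlt a b 1 = (1, b) := by rw [vecAlt, if_pos (Even.zero)]; simp [vecAlt]
    rw [h1]
    refine ⟨hb', by simp, by simpa using by nlinarith⟩
  | succ k ih =>
    obtain ⟨hy, hybx, hxay⟩ := ih
    set x := (vecAlt a b (2*k+1)).1 with hx
    set y := (vecAlt a b (2*k+1)).2 with hyd
    have hodd : ¬ Even (2*k+1) := by simp [Nat.even_add_one, Nat.even_mul]
    have heven : Even (2*k+2) := by refine ⟨k+1, by ring⟩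
    have e2 : vecAlt a b (2*k+2) = (a * y - x, y) := by
      rw [show 2*k+2 = (2*k+1)+1 from rfl, vecAlt, if_neg hodd]
    have e3 : vecAlt a b (2*(k+1)+1) = (a*y - x, b*(a*y-x) - y) := by
      rw [show 2*(k+1)+1 = (2*k+2)+1 by ring, vecAlt, if_pos heven, e2]
    rw [e3]
    dsimp only
    have hx'ay : a * y ≤ 2 * (a*y - x) := by linarith
    have hx'nn : 0 ≤ a*y - x := by nlinarith
    refine ⟨by nlinarith, by nlinarith, ?_⟩
    have h4x : 4 * (a*y-x) ≤ (a*b) * (a*y-x) := by nlinarith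
    nlinarith

lemma vecAlt_nonneg_inf (a b : ℝ) (ha : 0 ≤ a) (hb : 0 ≤ b) (hab : 4 ≤ a * b) (n : ℕ) :
    0 ≤ (vecAlt a b n).1 ∧ 0 ≤ (vecAlt a b n).2 := by
  have ha' : 0 < a := by rcases ha.lt_or_eq with h | h; exact h; rw [← h] at hab; simp at hab; linarith
  have hb' : 0 < b := by rcases hb.lt_or_eq with h | h; exact h; rw [← h] at hab; simp at hab; linarith
  rcases Nat.eq_zero_or_pos n with rfl | hn
  · simp [vecAlt]
  rcases Nat.even_or_odd n with he | ho
  · obtain ⟨k, hk⟩ : ∃ k, n = 2*k+2 := by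
      obtain ⟨j, hj⟩ := he; exact ⟨j - 1, by omega⟩
    subst hk
    obtain ⟨hy, hybx, hxay⟩ := vecAlt_inv_inf a b ha hb hab k
    have hodd : ¬ Even (2*k+1) := by simp [Nat.even_add_one, Nat.even_mul]
    have e2 : vecAlt a b (2*k+2) = (a * (vecAlt a b (2*k+1)).2 - (vecAlt a b (2*k+1)).1,
        (vecAlt a b (2*k+1)).2) := by
      rw [show 2*k+2 = (2*k+1)+1 from rfl, vecAlt, if_neg hodd]
    rw [e2]
    dsimp only
    exact ⟨by nlinarith, by nlinarith⟩
  · obtain ⟨k, hk⟩ := ho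
    subst hk
    obtain ⟨hy, hybx, hxay⟩ := vecAlt_inv_inf a b ha hb hab k
    exact ⟨by nlinarith, by nlinarith⟩

variable [DecidableEq ι]

lemma S_apply' (E : EGCM ι) (i : ι) (v : ι → ℝ) :
    E.S i v = v - (∑ k, E.M i k * v k) • (Pi.single i 1 : ι → ℝ) := by
  simp [S, LinearMap.sub_apply, LinearMap.smulRight_apply, LinearMap.sum_apply]

lemma sum_single_pair (E : EGCM ι) {i j : ι} (hij : i ≠ j) (p q : ℝ) :
    ∑ k, E.M i k * (p • (Pi.single i 1 : ι → ℝ) + q • (Pi.single j 1 : ι → ℝ)) k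
      = 2 * p + E.M i j * q := by
  have h : ∀ k, E.M i k * (p • (Pi.single i 1 : ι → ℝ) + q • (Pi.single j 1 : ι → ℝ)) k
      = p * (E.M i k * (Pi.single i 1 : ι → ℝ) k) + q * (E.M i k * (Pi.single j 1 : ι → ℝ) k) := by
    intro k; simp only [Pi.add_apply, Pi.smul_apply, Pi.single_apply, smul_eq_mul, mul_ite,
      mul_zero, mul_one, mul_add]
    split_ifs <;> ring
  rw [Finset.sum_congr rfl fun k _ => h k, Finset.sum_add_distrib]
  simp [Pi.single_apply, mul_ite, E.diag i]
  ring

lemma S_plane_left (E : EGCM ι) {i j : ι} (hij : i ≠ j) (p q : ℝ) :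
    E.S i (p • (Pi.single i 1 : ι → ℝ) + q • (Pi.single j 1 : ι → ℝ))
      = ((-E.M i j) * q - p) • (Pi.single i 1 : ι → ℝ) + q • (Pi.single j 1 : ι → ℝ) := by
  rw [S_apply', sum_single_pair E hij]
  ext x
  simp only [Pi.add_apply, Pi.sub_apply, Pi.smul_apply, Pi.single_apply, smul_eq_mul,
    mul_ite, mul_zero, mul_one]
  split_ifs <;> ring

lemma S_plane_right (E : EGCM ι) {i j : ι} (hij : i ≠ j) (p q : ℝ) :
    E.S j (p • (Pi.single i 1 : ι → ℝ) + q • (Pi.single j 1 : ι → ℝ))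
      = p • (Pi.single i 1 : ι → ℝ) + ((-E.M j i) * p - q) • (Pi.single j 1 : ι → ℝ) := by
  have h : (p • (Pi.single i 1 : ι → ℝ) + q • (Pi.single j 1 : ι → ℝ))
      = (q • (Pi.single j 1 : ι → ℝ) + p • (Pi.single i 1 : ι → ℝ)) := by abel
  rw [h, S_apply', sum_single_pair E hij.symm]
  ext x
  simp only [Pi.add_apply, Pi.sub_apply, Pi.smul_apply, Pi.single_apply, smul_eq_mul,
    mul_ite, mul_zero, mul_one]
  split_ifs <;> ring

lemma S_single_self (E : EGCM ι) (i : ι) :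
    E.S i (Pi.single i 1 : ι → ℝ) = -(Pi.single i 1 : ι → ℝ) := by
  rw [S_apply']
  have h : ∑ k, E.M i k * (Pi.single i 1 : ι → ℝ) k = 2 := by
    simp [Pi.single_apply, mul_ite, E.diag i]
  rw [h]
  ext x
  simp [Pi.single_apply]
  split_ifs <;> ring

open Classical in
lemma m_spec_fin (E : EGCM ι) {i j : ι} (hij : i ≠ j) (hm : E.m i j ≠ 0) :
    2 ≤ E.m i j ∧ E.M i j * E.M j i = 4 * Real.cos (Real.pi / (E.m i j)) ^ 2 := by
  unfold m at hm ⊢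
  rw [if_neg hij] at hm ⊢
  by_cases h : ∃ k : ℕ, 2 ≤ k ∧ E.M i j * E.M j i = 4 * Real.cos (Real.pi / k) ^ 2
  · rw [dif_pos h] at hm ⊢
    exact Nat.find_spec h
  · rw [dif_neg h] at hm
    exact absurd rfl hm

open Classical in
lemma m_spec_inf (E : EGCM ι) {i j : ι} (hij : i ≠ j) (hm : E.m i j = 0) :
    4 ≤ E.M i j * E.M j i := by
  unfold m at hm
  rw [if_neg hij] at hm
  by_cases h : ∃ k : ℕ, 2 ≤ k ∧ E.M i j * E.M j i = 4 * Real.cos (Real.pi / k) ^ 2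
  · rw [dif_pos h] at hm
    have := Nat.find_spec h
    omega
  · have hM0 : E.M i j ≠ 0 := by
      intro h0
      apply h
      refine ⟨2, le_refl 2, ?_⟩
      have h0' : E.M j i = 0 := (E.zero_iff i j).mp h0
      rw [h0, h0']
      norm_num [Real.cos_pi_div_two]
    have hprod : E.M i j * E.M j i ≠ 0 :=
      mul_ne_zero hM0 (fun hz => hM0 ((E.zero_iff i j).mpr hz))
    rcases E.prod_cond i j hij hprod with h4 | ⟨k, hk3, hk⟩
    · exact h4
    · exact absurd ⟨k, by omega, hk⟩ h

end EGCM

end Aux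
section RootPos

open CoxeterSystem

namespace EGCM

variable {ι : Type*} [Fintype ι] [DecidableEq ι] (E : EGCM ι)
variable {W : Type*} [Group W] (cs : CoxeterSystem E.cox W)
variable (σ : W →* Module.End ℝ (ι → ℝ))

lemma cox_apply (i j : ι) : E.cox i j = E.m i j := rfl

lemma alt_root (hσ : ∀ i, σ (cs.simple i) = E.S i) {i j : ι} (hij : i ≠ j) (n : ℕ) :
    σ (cs.wordProd (alternatingWord i j n)) (Pi.single i 1)
      = (vecAlt (-E.M i j) (-E.M j i) n).1 • (Pi.single i 1 : ι → ℝ)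
        + (vecAlt (-E.M i j) (-E.M j i) n).2 • (Pi.single j 1 : ι → ℝ) := by
  induction n with
  | zero =>
    simp [alternatingWord, vecAlt]
  | succ n ih =>
    rw [alternatingWord_succ', wordProd_cons, map_mul, Module.End.mul_apply, ih, hσ]
    by_cases he : Even n
    · rw [if_pos he, E.S_plane_right hij,
        show vecAlt (-E.M i j) (-E.M j i) (n+1)
          = ((vecAlt (-E.M i j) (-E.M j i) n).1,
             (-E.M j i) * (vecAlt (-E.M i j) (-E.M j i) n).1
               - (vecAlt (-E.M i j) (-E.M j i) n).2)
          from by rw [vecAlt, if_pos he]]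
    · rw [if_neg he, E.S_plane_left hij,
        show vecAlt (-E.M i j) (-E.M j i) (n+1)
          = ((-E.M i j) * (vecAlt (-E.M i j) (-E.M j i) n).2
               - (vecAlt (-E.M i j) (-E.M j i) n).1,
             (vecAlt (-E.M i j) (-E.M j i) n).2)
          from by rw [vecAlt, if_neg he]]

/-- Key theorem: if `ℓ(w sᵢ) > ℓ(w)` then `σ w (αᵢ)` is a nonnegative vector. -/
theorem rootPos (hσ : ∀ i, σ (cs.simple i) = E.S i) : ∀ N (w : W) (i : ι), cs.length w < N →
    cs.length w < cs.length (w * cs.simple i) →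
    ∀ x, 0 ≤ σ w (Pi.single i 1) x := by
  intro N
  induction N with
  | zero => intro w i h; omega
  | succ N ihN =>
    intro w i hwN hasc x
    by_cases hw1 : w = 1
    · subst hw1
      rw [map_one]
      simp only [Module.End.one_apply, Pi.single_apply]
      split <;> norm_num
    · obtain ⟨j, hj⟩ := cs.exists_rightDescent_of_ne_one hw1
      have hij : i ≠ j := by
        rintro rfl
        unfold CoxeterSystem.IsRightDescent at hj
        omega
      have ha : 0 ≤ -E.M i j := by linarith [E.offDiag_nonpos i j hij]
      have hb : 0 ≤ -E.M j i := by linarith [E.offDiag_nonpos j i hij.symm]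
      have hm2 : E.m i j ≠ 0 → 2 ≤ E.m i j := fun h => (E.m_spec_fin hij h).1
      have inner : ∀ K (u : W) (n : ℕ), cs.length u < K →
          w = u * cs.wordProd (alternatingWord i j n) →
          cs.length u + n = cs.length w →
          (E.m i j = 0 ∨ n ≤ E.m i j) →
          (n = 0 ∨ cs.length u < cs.length (u * cs.simple (if Even (n-1) then j else i))) →
          0 ≤ σ w (Pi.single i 1) x := by
        intro K
        induction K with
        | zero => intro u n h; omega
        | succ K ihK =>
          intro u n huK hw hlen hbound hprev
          by_cases hbr : E.m i j ≠ 0 ∧ n = E.m i j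
          · -- braid contradiction: the hypothesis ℓ(w sᵢ) > ℓ(w) fails
            exfalso
            obtain ⟨hmne, hnm⟩ := hbr
            have hn1 : 1 ≤ n := by have := hm2 hmne; omega
            have hb1 : cs.wordProd (alternatingWord i j n)
                = cs.wordProd (alternatingWord j i n) := by
              have h := cs.wordProd_braidWord_eq i j
              unfold CoxeterSystem.braidWord at h
              have h2 : E.cox j i = E.cox i j := by
                show E.m j i = E.m i j
                exact (E.m_symm i j).symm
              rw [h2] at h
              have h3 : E.cox i j = n := hnm.symm
              rw [h3] at h
              exact h
            have hb2 : alternatingWord j i n = (alternatingWord i j (n-1)).concat i := by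
              rw [show n = (n-1)+1 by omega, alternatingWord_succ]
              simp
            have hws : w * cs.simple i = u * cs.wordProd (alternatingWord i j (n-1)) := by
              rw [hw, hb1, hb2, wordProd_concat, mul_assoc, mul_assoc,
                cs.simple_mul_simple_self, mul_one]
            have hlen2 : cs.length (w * cs.simple i) ≤ cs.length u + (n-1) := by
              rw [hws]
              calc cs.length (u * cs.wordProd (alternatingWord i j (n-1)))
                  ≤ cs.length u + cs.length (cs.wordProd (alternatingWord i j (n-1))) :=
                    cs.length_mul_le _ _
                _ ≤ cs.length u + (n-1) := by
                    have := cs.length_wordProd_le (alternatingWord i j (n-1))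
                    rw [length_alternatingWord] at this
                    omega
            omega
          · -- no braid yet
            have hbound' : E.m i j = 0 ∨ n < E.m i j := by
              rcases hbound with h | h
              · exact Or.inl h
              · rcases eq_or_ne (E.m i j) 0 with h0 | h0
                · exact Or.inl h0
                · right
                  rcases eq_or_ne n (E.m i j) with he | hne'
                  · exact absurd ⟨h0, he⟩ hbr
                  · omega
            set c : ι := if Even n then j else i with hc
            rcases cs.length_mul_simple u c with hasc' | hdesc
            · -- terminal case
              rcases hprev with rfl | hprev
              · -- n = 0 : contradiction with descent j
                exfalso
                have hc0 : c = j := by rw [hc, if_pos Even.zero]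
                have hu : u = w := by
                  rw [hw]; simp [alternatingWord, wordProd_nil]
                rw [hc0] at hasc'
                rw [← hu] at hj
                unfold CoxeterSystem.IsRightDescent at hj
                omega
              · have hn1 : 1 ≤ n := by
                  by_contra hcon
                  have h0 : n = 0 := by omega
                  subst h0
                  rw [show (0:ℕ) - 1 = 0 from rfl, if_pos Even.zero] at hprev
                  have hu : u = w := by rw [hw]; simp [alternatingWord, wordProd_nil]
                  rw [hu] at hprev
                  unfold CoxeterSystem.IsRightDescent at hj
                  omega
                have hne := Nat.even_or_odd n
                have hui : cs.length u < cs.length (u * cs.simple i) := by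
                  rcases hne with he | ho
                  · have hmod := Nat.even_iff.mp he
                    have hodd : ¬ Even (n-1) := by rw [Nat.even_iff]; omega
                    rw [if_neg hodd] at hprev
                    exact hprev
                  · have hmod := Nat.odd_iff.mp ho
                    have hci : c = i := by rw [hc, if_neg (by rw [Nat.even_iff]; omega)]
                    rw [hci] at hasc'
                    omega
                have huj : cs.length u < cs.length (u * cs.simple j) := by
                  rcases hne with he | ho
                  · have hcj : c = j := by rw [hc, if_pos he]
                    rw [hcj] at hasc'
                    omega
                  · have hmod := Nat.odd_iff.mp ho
                    have heven : Even (n-1) := by rw [Nat.even_iff]; omega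
                    rw [if_pos heven] at hprev
                    exact hprev
                have h1 := ihN u i (by omega) hui
                have h2 := ihN u j (by omega) huj
                have hvec : 0 ≤ (vecAlt (-E.M i j) (-E.M j i) n).1 ∧
                    0 ≤ (vecAlt (-E.M i j) (-E.M j i) n).2 := by
                  rcases hbound' with h0 | hlt
                  · refine vecAlt_nonneg_inf _ _ ha hb ?_ n
                    rw [neg_mul_neg]
                    exact E.m_spec_inf hij h0
                  · rcases Nat.lt_or_ge n 2 with hn2' | hn2''
                    · have h0 : n = 1 := by omega
                      rw [h0]
                      rw [show vecAlt (-E.M i j) (-E.M j i) 1 = (1, -E.M j i) from by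
                        rw [vecAlt, if_pos Even.zero]; simp [vecAlt]]
                      exact ⟨by norm_num, hb⟩
                    · have hm3 : 3 ≤ E.m i j := by omega
                      refine vecAlt_nonneg_fin _ _ ha hb (E.m i j) hm3 ?_ n (by omega)
                      rw [neg_mul_neg]
                      exact (E.m_spec_fin hij (by omega)).2
                have expand : σ w (Pi.single i 1) x
                    = (vecAlt (-E.M i j) (-E.M j i) n).1 * (σ u (Pi.single i 1) x)
                      + (vecAlt (-E.M i j) (-E.M j i) n).2 * (σ u (Pi.single j 1) x) := by
                  rw [hw, map_mul, Module.End.mul_apply, alt_root E cs σ hσ hij n,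
                    map_add, map_smul, map_smul]
                  simp [Pi.smul_apply]
                rw [expand]
                have := h1 x
                have := h2 x
                nlinarith [hvec.1, hvec.2]
            · -- descent: recurse
              have hstep : cs.simple c * cs.wordProd (alternatingWord i j n)
                  = cs.wordProd (alternatingWord i j (n+1)) := by
                rw [alternatingWord_succ', wordProd_cons]
              refine ihK (u * cs.simple c) (n+1) (by omega) ?_ ?_ ?_ ?_
              · rw [hw, ← hstep, ← mul_assoc, cs.simple_mul_simple_cancel_right]
              · omega
              · rcases hbound' with h | h
                · exact Or.inl h
                · exact Or.inr (by omega)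
              · right
                simp only [Nat.add_sub_cancel]
                rw [← hc, cs.simple_mul_simple_cancel_right]
                omega
      exact inner (cs.length w + 1) w 0 (by omega)
        (by simp [alternatingWord, wordProd_nil]) (by omega)
        (Or.inr (Nat.zero_le _)) (Or.inl rfl)

end EGCM

end RootPos
section Pairing

open CoxeterSystem

namespace EGCM

variable {ι : Type*} [Fintype ι] [DecidableEq ι] (E : EGCM ι)
variable {W : Type*} [Group W] (cs : CoxeterSystem E.cox W)
variable (σ : W →* Module.End ℝ (ι → ℝ))

lemma pick_single (f : ι → ℝ) (i : ι) :
    ∑ x, f x * (Pi.single i 1 : ι → ℝ) x = f i := by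
  simp [Pi.single_apply, mul_ite, Finset.sum_ite_eq']

lemma fire_pair (lam v : ι → ℝ) (i : ι) :
    ∑ x, (E.fire lam i) x * v x = ∑ x, lam x * (E.S i v) x := by
  rw [S_apply']
  have hL : ∀ x, (E.fire lam i) x * v x = lam x * v x - (E.M i x * v x) * lam i := by
    intro x; simp only [EGCM.fire]; ring
  have hR : ∀ x, lam x * (v - (∑ k, E.M i k * v k) • (Pi.single i 1 : ι → ℝ)) x
      = lam x * v x - (∑ k, E.M i k * v k) * (lam x * (Pi.single i 1 : ι → ℝ) x) := by
    intro x
    simp only [Pi.sub_apply, Pi.smul_apply, smul_eq_mul]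
    ring
  rw [Finset.sum_congr rfl (fun x _ => hL x), Finset.sum_congr rfl (fun x _ => hR x),
    Finset.sum_sub_distrib, Finset.sum_sub_distrib]
  congr 1
  rw [← Finset.sum_mul, ← Finset.mul_sum, pick_single lam i, mul_comm]

lemma fireList_pair (hσ : ∀ i, σ (cs.simple i) = E.S i) :
    ∀ (s : List ι) (lam v : ι → ℝ),
      ∑ x, (E.fireList lam s) x * v x = ∑ x, lam x * (σ (cs.wordProd s) v) x := by
  intro s
  induction s with
  | nil =>
    intro lam v
    simp [EGCM.fireList, wordProd_nil, map_one, Module.End.one_apply]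
  | cons i s ih =>
    intro lam v
    have h1 : E.fireList lam (i :: s) = E.fireList (E.fire lam i) s := rfl
    rw [h1, ih (E.fire lam i) v, fire_pair, wordProd_cons, map_mul, hσ]
    rfl

lemma legal_of : ∀ (l : List ι) (lam : ι → ℝ),
    (∀ q : Fin l.length, 0 < E.fireList lam (l.take (q : ℕ)) (l.get q)) → E.Legal lam l := by
  intro l
  induction l with
  | nil => intro lam _; trivial
  | cons i s ih =>
    intro lam h
    constructor
    · have h0 := h ⟨0, by simp⟩
      simpa [EGCM.fireList] using h0
    · apply ih (E.fire lam i)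
      intro q
      have hq := h ⟨(q : ℕ) + 1, by simp⟩
      simpa [EGCM.fireList] using hq

end EGCM

end Pairing
/-- **Proposition 3.2.** If `W_J` is finite, `lam` is `Jᶜ`-dominant, and
`s_{i_p} ⋯ s_{i_2} s_{i_1}` is a reduced expression for an element of `W^J`, then
`(γ_{i_1}, …, γ_{i_p})` is a legal firing sequence from `lam`; equivalently each root
`β_q = s_{i_1} ⋯ s_{i_{q-1}}.α_{i_q}` is positive and pairs positively with `lam`. -/
theorem egcm_minRep_reduced_word_legal {ι : Type*} [Fintype ι] [DecidableEq ι]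
    (E : EGCM ι) {W : Type*} [Group W] (cs : CoxeterSystem E.cox W)
    (σ : W →* Module.End ℝ (ι → ℝ)) (hσ : ∀ i, σ (cs.simple i) = E.S i)
    (J : Set ι) (hfin : Set.Finite (parabolic cs J : Set W))
    (lam : ι → ℝ) (hlam : EGCM.JcDominant J lam)
    (l : List ι) (hred : cs.IsReduced l.reverse)
    (hmem : cs.wordProd l.reverse ∈ minReps cs J) :
    E.Legal lam l ∧
      ∀ q : Fin l.length,
        (∀ x, 0 ≤ σ (cs.wordProd (l.take (q : ℕ))) (Pi.single (l.get q) 1) x) ∧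
        0 < ∑ x, lam x * σ (cs.wordProd (l.take (q : ℕ))) (Pi.single (l.get q) 1) x := by
  classical
  have hlred : cs.IsReduced l := (cs.isReduced_reverse_iff l).mp hred
  have lam_nonneg : ∀ x, 0 ≤ lam x := by
    intro x
    by_cases hx : x ∈ J
    · rw [hlam.1 x hx]
    · exact (hlam.2 x hx).le
  have key : ∀ q : Fin l.length,
      (∀ x, 0 ≤ σ (cs.wordProd (l.take (q : ℕ))) (Pi.single (l.get q) 1) x) ∧
      0 < ∑ x, lam x * σ (cs.wordProd (l.take (q : ℕ))) (Pi.single (l.get q) 1) x := by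
    intro q
    have hqlt : (q : ℕ) < l.length := q.isLt
    have hlen1 : cs.length (cs.wordProd (l.take (q : ℕ))) = (q : ℕ) := by
      have h := hlred.take (q : ℕ)
      unfold CoxeterSystem.IsReduced at h
      rw [h, List.length_take]
      omega
    have hsucc : l.take ((q : ℕ) + 1) = l.take (q : ℕ) ++ [l.get q] := by
      rw [List.take_succ]
      simp [List.getElem?_eq_getElem hqlt]
    have hprod : cs.wordProd (l.take ((q : ℕ) + 1))
        = cs.wordProd (l.take (q : ℕ)) * cs.simple (l.get q) := by
      rw [hsucc, CoxeterSystem.wordProd_append, CoxeterSystem.wordProd_singleton]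
    have hlen2 : cs.length (cs.wordProd (l.take ((q : ℕ) + 1))) = (q : ℕ) + 1 := by
      have h := hlred.take ((q : ℕ) + 1)
      unfold CoxeterSystem.IsReduced at h
      rw [h, List.length_take]
      omega
    have hasc : cs.length (cs.wordProd (l.take (q : ℕ))) <
        cs.length (cs.wordProd (l.take (q : ℕ)) * cs.simple (l.get q)) := by
      rw [← hprod, hlen1, hlen2]
      omega
    have hroot : ∀ x, 0 ≤ σ (cs.wordProd (l.take (q : ℕ))) (Pi.single (l.get q) 1) x :=
      E.rootPos cs σ hσ (cs.length (cs.wordProd (l.take (q : ℕ))) + 1) _ _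
        (Nat.lt_succ_self _) hasc
    refine ⟨hroot, ?_⟩
    have hterms : ∀ x, 0 ≤ lam x * σ (cs.wordProd (l.take (q : ℕ))) (Pi.single (l.get q) 1) x :=
      fun x => mul_nonneg (lam_nonneg x) (hroot x)
    by_contra hns
    have hzero : ∑ x, lam x * σ (cs.wordProd (l.take (q : ℕ))) (Pi.single (l.get q) 1) x = 0 :=
      le_antisymm (not_lt.mp hns) (Finset.sum_nonneg fun x _ => hterms x)
    have hterm0 : ∀ x, lam x * σ (cs.wordProd (l.take (q : ℕ))) (Pi.single (l.get q) 1) x = 0 := by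
      have h := (Finset.sum_eq_zero_iff_of_nonneg (fun x _ => hterms x)).mp hzero
      exact fun x => h x (Finset.mem_univ x)
    have hsupp : ∀ x, x ∉ J → σ (cs.wordProd (l.take (q : ℕ))) (Pi.single (l.get q) 1) x = 0 := by
      intro x hx
      rcases mul_eq_zero.mp (hterm0 x) with h | h
      · exact absurd h (hlam.2 x hx).ne'
      · exact h
    -- the decomposition of w
    have hdrop : l.drop (q : ℕ) = l.get q :: l.drop ((q : ℕ) + 1) := by
      rw [List.drop_eq_getElem_cons hqlt]
      simp
    have hlrev : l.reverse = ((l.drop ((q : ℕ) + 1)).reverse ++ [l.get q])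
        ++ (l.take (q : ℕ)).reverse := by
      conv_lhs => rw [← List.take_append_drop (q : ℕ) l, hdrop]
      rw [List.reverse_append, List.reverse_cons]
    have hdecomp : cs.wordProd l.reverse
        = cs.wordProd ((l.drop ((q : ℕ) + 1)).reverse ++ [l.get q])
          * (cs.wordProd (l.take (q : ℕ)))⁻¹ := by
      rw [hlrev, CoxeterSystem.wordProd_append, CoxeterSystem.wordProd_reverse]
    have hback : σ (cs.wordProd (l.take (q : ℕ)))⁻¹
        (σ (cs.wordProd (l.take (q : ℕ))) (Pi.single (l.get q) 1)) = Pi.single (l.get q) 1 := by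
      rw [← Module.End.mul_apply, ← map_mul, inv_mul_cancel, map_one, Module.End.one_apply]
    have hwβ : σ (cs.wordProd l.reverse) (σ (cs.wordProd (l.take (q : ℕ))) (Pi.single (l.get q) 1))
        = - σ (cs.wordProd ((l.drop ((q : ℕ) + 1)).reverse)) (Pi.single (l.get q) 1) := by
      rw [hdecomp, map_mul, Module.End.mul_apply, hback, CoxeterSystem.wordProd_append,
        CoxeterSystem.wordProd_singleton, map_mul, Module.End.mul_apply, hσ, E.S_single_self,
        map_neg]
    -- ascent for the drop part
    have hdroprev : (l.drop ((q : ℕ) + 1)).reverse ++ [l.get q] = (l.drop (q : ℕ)).reverse := by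
      rw [hdrop, List.reverse_cons]
    have hdropred : cs.IsReduced ((l.drop (q : ℕ)).reverse) :=
      (cs.isReduced_reverse_iff _).mpr (hlred.drop _)
    have hAasc : cs.length (cs.wordProd ((l.drop ((q : ℕ) + 1)).reverse)) <
        cs.length (cs.wordProd ((l.drop ((q : ℕ) + 1)).reverse) * cs.simple (l.get q)) := by
      have h1 : cs.wordProd ((l.drop ((q : ℕ) + 1)).reverse) * cs.simple (l.get q)
          = cs.wordProd ((l.drop (q : ℕ)).reverse) := by
        rw [← hdroprev, CoxeterSystem.wordProd_append, CoxeterSystem.wordProd_singleton]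
      have h2 : cs.length (cs.wordProd ((l.drop (q : ℕ)).reverse)) = l.length - (q : ℕ) := by
        unfold CoxeterSystem.IsReduced at hdropred
        rw [hdropred, List.length_reverse, List.length_drop]
      have h3 : cs.length (cs.wordProd ((l.drop ((q : ℕ) + 1)).reverse))
          ≤ l.length - ((q : ℕ) + 1) := by
        have h4 := cs.length_wordProd_le ((l.drop ((q : ℕ) + 1)).reverse)
        rwa [List.length_reverse, List.length_drop] at h4
      rw [h1, h2]
      omega
    have hAroot : ∀ x, 0 ≤ σ (cs.wordProd ((l.drop ((q : ℕ) + 1)).reverse))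
        (Pi.single (l.get q) 1) x :=
      E.rootPos cs σ hσ _ _ _ (Nat.lt_succ_self _) hAasc
    have hwβ_nonpos : ∀ y, σ (cs.wordProd l.reverse)
        (σ (cs.wordProd (l.take (q : ℕ))) (Pi.single (l.get q) 1)) y ≤ 0 := by
      intro y
      rw [hwβ]
      simp only [Pi.neg_apply, neg_nonpos]
      exact hAroot y
    have hβsum : σ (cs.wordProd (l.take (q : ℕ))) (Pi.single (l.get q) 1)
        = ∑ x, σ (cs.wordProd (l.take (q : ℕ))) (Pi.single (l.get q) 1) x
          • (Pi.single x 1 : ι → ℝ) := by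
      have h5 := Finset.univ_sum_single (σ (cs.wordProd (l.take (q : ℕ))) (Pi.single (l.get q) 1))
      rw [← h5]
      congr 1
      funext x
      ext y
      simp [Pi.single_apply]
    have hwβ_nonneg : ∀ y, 0 ≤ σ (cs.wordProd l.reverse)
        (σ (cs.wordProd (l.take (q : ℕ))) (Pi.single (l.get q) 1)) y := by
      intro y
      rw [hβsum, map_sum, Finset.sum_apply]
      apply Finset.sum_nonneg
      intro x _
      rw [map_smul]
      simp only [Pi.smul_apply, smul_eq_mul]
      by_cases hx : x ∈ J
      · apply mul_nonneg (hroot x)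
        exact E.rootPos cs σ hσ _ _ _ (Nat.lt_succ_self _) (hmem x hx) y
      · rw [hsupp x hx, zero_mul]
    have hσwβ : σ (cs.wordProd l.reverse)
        (σ (cs.wordProd (l.take (q : ℕ))) (Pi.single (l.get q) 1)) = 0 := by
      funext y
      exact le_antisymm (hwβ_nonpos y) (hwβ_nonneg y)
    have hβ0 : σ (cs.wordProd (l.take (q : ℕ))) (Pi.single (l.get q) 1) = 0 := by
      have h6 : σ (cs.wordProd l.reverse)⁻¹
          (σ (cs.wordProd l.reverse)
            (σ (cs.wordProd (l.take (q : ℕ))) (Pi.single (l.get q) 1)))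
          = σ (cs.wordProd (l.take (q : ℕ))) (Pi.single (l.get q) 1) := by
        rw [← Module.End.mul_apply, ← map_mul, inv_mul_cancel, map_one, Module.End.one_apply]
      rw [← h6, hσwβ, map_zero]
    rw [hβ0, map_zero] at hback
    have h7 := congrFun hback (l.get q)
    simp [Pi.single_apply] at h7
  constructor
  · apply E.legal_of l lam
    intro q
    have hpair := E.fireList_pair cs σ hσ (l.take (q : ℕ)) lam (Pi.single (l.get q) 1)
    have hpos := (key q).2
    rw [← hpair, EGCM.pick_single] at hpos
    exact hpos
  · exact key
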